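/- Let E be a vector bundle over M with connection ∇ and ρ : E → TM a morphism of vector bundles, and define a bracket on sections of E by [s₁,s₂] = ∇_{ρ∘s₁}s₂ − ∇_{ρ∘s₂}s₁. Then (E, [·,·], ρ) is a Lie algebroid if and only if ∇ is torsion free with respect to ρ and its curvature R satisfies R(ρ(e₁),ρ(e₂))e₃ + R(ρ(e₂),ρ(e₃))e₁ + R(ρ(e₃),ρ(e₁))e₂ = 0 for all e₁,e₂,e₃ in a common fibre of E. -/
import Mathlib


/-! Abstract algebraic model of vector calculus on a manifold `M`:
`R` plays the role of the ring of smooth functions `C^∞(M)`,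
`X` the `R`-module of vector fields on `M` (a Lie ring acting on `R` by
derivations), and `E` the `R`-module of sections of a vector bundle over `M`. -/

/-- The data of the Lie algebra of vector fields `X` acting by derivations on the
ring `R` of functions, with the usual compatibilities. -/
structure VectorFieldCalculus (R X : Type*) [CommRing R] [LieRing X] [Module R X] where
  act : X → R → R
  act_add_left : ∀ x y f, act (x + y) f = act x f + act y f
  act_smul_left : ∀ (f : R) (x : X) (g : R), act (f • x) g = f * act x g
  act_add_right : ∀ x f g, act x (f + g) = act x f + act x g
  act_mul_right : ∀ x f g, act x (f * g) = f * act x g + g * act x f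
  act_bracket : ∀ x y f, act ⁅x, y⁆ f = act x (act y f) - act y (act x f)
  bracket_smul : ∀ (x : X) (f : R) (y : X), ⁅x, f • y⁆ = f • ⁅x, y⁆ + (act x f) • y

/-- A (Koszul) connection on the module of sections `E`, relative to the
vector-field calculus `C`. -/
structure ConnectionOn (R X E : Type*) [CommRing R] [LieRing X] [Module R X]
    [AddCommGroup E] [Module R E] (C : VectorFieldCalculus R X) where
  cov : X → E → E
  cov_add_left : ∀ x y s, cov (x + y) s = cov x s + cov y s
  cov_smul_left : ∀ (f : R) (x : X) (s : E), cov (f • x) s = f • cov x s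
  cov_add_right : ∀ x s t, cov x (s + t) = cov x s + cov x t
  cov_leibniz : ∀ (x : X) (f : R) (s : E), cov x (f • s) = (C.act x f) • s + f • cov x s


/-- With the bracket `[s₁,s₂] = ∇_{ρ∘s₁}s₂ − ∇_{ρ∘s₂}s₁` on sections
of `E`, the triple `(E, [·,·], ρ)` is a Lie algebroid (Jacobi identity, anchor
intertwines the brackets, Leibniz rule) if and only if `∇` is torsion free with
respect to `ρ` and its curvature `R` satisfies
`R(ρ e₁, ρ e₂)e₃ + R(ρ e₂, ρ e₃)e₁ + R(ρ e₃, ρ e₁)e₂ = 0`. -/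
theorem lie_algebroid_iff_torsionFree_and_firstBianchi
    {R X E : Type*} [CommRing R] [LieRing X] [Module R X]
    [AddCommGroup E] [Module R E]
    (C : VectorFieldCalculus R X) (D : ConnectionOn R X E C)
    (ρ : E →ₗ[R] X)
    (b : E → E → E)
    (hb : ∀ s₁ s₂ : E, b s₁ s₂ = D.cov (ρ s₁) s₂ - D.cov (ρ s₂) s₁)
    (Rc : X → X → E → E)
    (hRc : ∀ (x y : X) (s : E),
      Rc x y s = D.cov x (D.cov y s) - D.cov y (D.cov x s) - D.cov ⁅x, y⁆ s) :
    ((∀ s₁ s₂ s₃ : E, b s₁ (b s₂ s₃) + b s₂ (b s₃ s₁) + b s₃ (b s₁ s₂) = 0) ∧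
     (∀ s₁ s₂ : E, ρ (b s₁ s₂) = ⁅ρ s₁, ρ s₂⁆) ∧
     (∀ (s₁ : E) (f : R) (s₂ : E),
        b s₁ (f • s₂) = f • b s₁ s₂ + (C.act (ρ s₁) f) • s₂))
    ↔
    ((∀ s₁ s₂ : E, ρ (b s₁ s₂) = ⁅ρ s₁, ρ s₂⁆) ∧
     (∀ e₁ e₂ e₃ : E,
        Rc (ρ e₁) (ρ e₂) e₃ + Rc (ρ e₂) (ρ e₃) e₁ + Rc (ρ e₃) (ρ e₁) e₂ = 0)) := by
  have csub : ∀ (x : X) (s t : E), D.cov x (s - t) = D.cov x s - D.cov x t := by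
    intro x s t
    have h := D.cov_add_right x (s - t) t
    rw [sub_add_cancel] at h
    exact eq_sub_of_add_eq h.symm
  have key : (∀ s₁ s₂ : E, ρ (b s₁ s₂) = ⁅ρ s₁, ρ s₂⁆) → ∀ e₁ e₂ e₃ : E,
      Rc (ρ e₁) (ρ e₂) e₃ + Rc (ρ e₂) (ρ e₃) e₁ + Rc (ρ e₃) (ρ e₁) e₂
        = b e₁ (b e₂ e₃) + b e₂ (b e₃ e₁) + b e₃ (b e₁ e₂) := by
    intro h e₁ e₂ e₃
    rw [hb e₁ (b e₂ e₃), hb e₂ (b e₃ e₁), hb e₃ (b e₁ e₂), h e₂ e₃, h e₃ e₁, h e₁ e₂,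
      hb e₂ e₃, hb e₃ e₁, hb e₁ e₂, hRc, hRc, hRc, csub, csub, csub]
    abel
  constructor
  · rintro ⟨hJ, hA, _⟩
    exact ⟨hA, fun e₁ e₂ e₃ => (key hA e₁ e₂ e₃).trans (hJ e₁ e₂ e₃)⟩
  · rintro ⟨hA, hB⟩
    refine ⟨fun s₁ s₂ s₃ => ?_, hA, fun s₁ f s₂ => ?_⟩
    · rw [← key hA s₁ s₂ s₃]
      exact hB s₁ s₂ s₃
    · rw [hb, hb, map_smul, D.cov_smul_left, D.cov_leibniz, smul_sub]
      abel
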